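/- Let 1 ≤ k ≤ m and let C ⊆ F_{q^m}^k be a nonzero Gabidulin code of dimension 1 ≤ t ≤ k. For any 1 ≤ r ≤ t, the r-th generalized rank weight m_r(C) = min{dim(V) : V Frobenius-closed, dim(V ∩ C) ≥ r} equals min{dim(A) : A ⊆ F_{q^m}^k with dim_{F_{q^m}}(A) = maxrk(A) and dim(A ∩ C) ≥ r}. -/

import Mathlib

/-- Rank of a vector v ∈ L^k over K. -/
noncomputable def vrk (K : Type*) {L : Type*} [Field K] [Field L] [Algebra K L]
    {k : ℕ} (v : Fin k → L) : ℕ :=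
  Module.finrank K (Submodule.span K (Set.range v))

/-- Maximum rank of a Gabidulin code. -/
noncomputable def maxrk (K : Type*) {L : Type*} [Field K] [Field L] [Algebra K L]
    {k : ℕ} (C : Submodule L (Fin k → L)) : ℕ :=
  sSup {r | ∃ v ∈ C, vrk K v = r}

/-- V is Frobenius-closed if stable under the componentwise q-power map. -/
def FrobClosed (K : Type*) {L : Type*} [Field K] [Fintype K] [Field L] [Algebra K L]
    {k : ℕ} (V : Submodule L (Fin k → L)) : Prop :=
  ∀ v ∈ V, (fun i => v i ^ Fintype.card K) ∈ V

open Polynomial in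
theorem card_le_of_pow_eq_one (L : Type*) [Field L] (N : ℕ) (hN : 1 ≤ N) (s : Finset L)
    (hs : ∀ x ∈ s, x ^ N = 1) : s.card ≤ N := by
  classical
  set P : L[X] := X ^ N - C 1 with hP
  have hdeg : P.natDegree = N := Polynomial.natDegree_X_pow_sub_C
  have hne : P ≠ 0 := by
    intro h; rw [h] at hdeg; simp at hdeg; omega
  have hsub : s ⊆ P.roots.toFinset := by
    intro x hx
    rw [Multiset.mem_toFinset, Polynomial.mem_roots hne]
    simp [hP, Polynomial.IsRoot, hs x hx]
  calc s.card ≤ _ := Finset.card_le_card hsub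
    _ ≤ Multiset.card P.roots := Multiset.toFinset_card_le _
    _ ≤ P.natDegree := Polynomial.card_roots' P
    _ = N := hdeg

theorem card_le_of_pow_eq_self (L : Type*) [Field L] (N : ℕ) (hN : 2 ≤ N) (s : Finset L)
    (hs : ∀ x ∈ s, x ^ N = x) : s.card ≤ N := by
  classical
  have h1 : s.erase 0 ⊆ s := Finset.erase_subset _ _
  have h2 : ∀ x ∈ s.erase 0, x ^ (N - 1) = 1 := by
    intro x hx
    have hx0 : x ≠ 0 := Finset.ne_of_mem_erase hx
    have := hs x (h1 hx)
    have : x ^ (N - 1) * x = 1 * x := by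
      rw [one_mul, ← pow_succ]
      have : N - 1 + 1 = N := by omega
      rw [this, hs x (h1 hx)]
    exact mul_right_cancel₀ hx0 this
  have ha := card_le_of_pow_eq_one L (N - 1) (by omega) (s.erase 0) h2
  have hb : s ⊆ insert (0:L) (s.erase 0) := by
    intro x hx
    by_cases h0 : x = 0
    · simp [h0]
    · exact Finset.mem_insert_of_mem (Finset.mem_erase.2 ⟨h0, hx⟩)
  have := (Finset.card_le_card hb).trans (Finset.card_insert_le _ _)
  omega

section Aux
variable {K L : Type*} [Field K] [Field L] [Algebra K L] [Fintype K] {k : ℕ}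
set_option linter.unusedSectionVars false

theorem exists_frob : ∃ f : L →+* L, ∀ x, f x = x ^ Fintype.card K := by
  set p := ringChar K with hp
  haveI : CharP K p := ringChar.charP K
  obtain ⟨n, hpp, hq⟩ := FiniteField.card K p
  haveI : CharP L p := charP_of_injective_algebraMap (algebraMap K L).injective p
  haveI : Fact p.Prime := ⟨hpp⟩
  exact ⟨iterateFrobenius L p n, fun x => by rw [iterateFrobenius_def, hq]⟩

variable {f : L →+* L}

theorem frob_algebraMap (hf : ∀ x, f x = x ^ Fintype.card K) (a : K) : f (algebraMap K L a) = algebraMap K L a := by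
  rw [hf, ← map_pow, FiniteField.pow_card]

theorem frob_mem_range (hf : ∀ x, f x = x ^ Fintype.card K) {x : L} (hx : x ∈ (algebraMap K L).range) : f x = x := by
  obtain ⟨a, rfl⟩ := hx; exact frob_algebraMap hf a

theorem fixed_mem_range (hf : ∀ x, f x = x ^ Fintype.card K) {x : L} (hx : f x = x) : x ∈ (algebraMap K L).range := by
  classical
  by_contra hmem
  set s : Finset L := insert x (Finset.univ.image (algebraMap K L)) with hs
  have hcard : s.card = Fintype.card K + 1 := by
    rw [hs, Finset.card_insert_of_notMem (by simpa using hmem),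
      Finset.card_image_of_injective _ (algebraMap K L).injective, Finset.card_univ]
  have h2 : 2 ≤ Fintype.card K := Fintype.one_lt_card
  have := card_le_of_pow_eq_self L (Fintype.card K) h2 s ?_
  · omega
  · intro y hy
    rw [hs, Finset.mem_insert] at hy
    rcases hy with rfl | hy
    · rw [← hf]; exact hx
    · simp only [Finset.mem_image] at hy
      obtain ⟨a, _, rfl⟩ := hy
      rw [← hf]; exact frob_algebraMap hf a

theorem frob_iterate (hf : ∀ x, f x = x ^ Fintype.card K) (j : ℕ) (x : L) : f^[j] x = x ^ (Fintype.card K) ^ j := by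
  induction j generalizing x with
  | zero => simp
  | succ j ih =>
    rw [Function.iterate_succ_apply, ih, hf, ← pow_mul, pow_succ, mul_comm ((Fintype.card K)^j)]

theorem frob_iterate_finrank [FiniteDimensional K L] (hf : ∀ x, f x = x ^ Fintype.card K) (x : L) :
    f^[Module.finrank K L] x = x := by
  haveI : Finite L := Module.finite_of_finite K
  haveI : Fintype L := Fintype.ofFinite L
  rw [frob_iterate hf, ← Module.card_eq_pow_finrank (K := K) (V := L), FiniteField.pow_card]

theorem pow_maps_injective [FiniteDimensional K L] :
    Function.Injective (fun j : Fin (Module.finrank K L) =>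
      powMonoidHom ((Fintype.card K) ^ (j : ℕ)) : Fin (Module.finrank K L) → (L →* L)) := by
  classical
  haveI : Finite L := Module.finite_of_finite K
  haveI : Fintype L := Fintype.ofFinite L
  set q := Fintype.card K with hq
  set m := Module.finrank K L with hmm
  have hq2 : 2 ≤ q := Fintype.one_lt_card
  have key : ∀ j j' : Fin m, (j : ℕ) < (j' : ℕ) →
      powMonoidHom (q ^ (j:ℕ)) ≠ (powMonoidHom (q ^ (j':ℕ)) : L →* L) := by
    intro j j' hlt heq
    set N := q ^ (j':ℕ) - q ^ (j:ℕ) with hN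
    have hje : q ^ (j:ℕ) ≤ q ^ (j':ℕ) := Nat.pow_le_pow_right (by omega) (le_of_lt hlt)
    have hjlt : q ^ (j:ℕ) < q ^ (j':ℕ) := Nat.pow_lt_pow_right (by omega) hlt
    have hj'm : q ^ (j':ℕ) < q ^ m := Nat.pow_lt_pow_right (by omega) j'.isLt
    have hj1 : 1 ≤ q ^ (j:ℕ) := Nat.one_le_pow _ _ (by omega)
    have hpow : ∀ x : L, x ≠ 0 → x ^ N = 1 := by
      intro x hx
      have hx' : x ^ (q ^ (j:ℕ)) = x ^ (q ^ (j':ℕ)) := by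
        have := congrArg (fun g : L →* L => g x) heq
        simpa [powMonoidHom] using this
      have : x ^ N * x ^ (q ^ (j:ℕ)) = 1 * x ^ (q ^ (j:ℕ)) := by
        rw [one_mul, ← pow_add, hN]
        rw [Nat.sub_add_cancel hje, hx']
      exact mul_right_cancel₀ (pow_ne_zero _ hx) this
    have hcard := card_le_of_pow_eq_one L N (by omega) (Finset.univ.erase 0)
      (fun x hx => hpow x (Finset.ne_of_mem_erase hx))
    have hLcard : Fintype.card L = q ^ m := Module.card_eq_pow_finrank
    have herase : (Finset.univ.erase (0:L)).card = Fintype.card L - 1 := by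
      rw [Finset.card_erase_of_mem (Finset.mem_univ _), Finset.card_univ]
    omega
  intro j j' heq
  rcases lt_trichotomy (j : ℕ) (j' : ℕ) with h | h | h
  · exact absurd heq (key j j' h)
  · exact Fin.ext h
  · exact absurd heq.symm (key j' j h)

theorem rows_linearIndependent [FiniteDimensional K L]
    {f : L →+* L} (hf : ∀ x, f x = x ^ Fintype.card K)
    (c : Module.Basis (Fin (Module.finrank K L)) K L) :
    LinearIndependent L (Matrix.of fun j i : Fin (Module.finrank K L) => f^[(j:ℕ)] (c i)) := by
  classical
  refine Fintype.linearIndependent_iff.mpr ?_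
  intro a ha
  have hiter : ∀ (j : ℕ) (b : K) (y : L), f^[j] (algebraMap K L b * y)
      = algebraMap K L b * f^[j] y := by
    intro j b y
    rw [frob_iterate hf, frob_iterate hf, mul_pow, ← map_pow, FiniteField.pow_card_pow]
  let ℓ : ℕ → (L →ₗ[K] L) := fun j =>
    { toFun := fun x => f^[j] x
      map_add' := fun x y => iterate_map_add f j x y
      map_smul' := fun b y => by simp only [Algebra.smul_def, RingHom.id_apply]; exact hiter j b y }
  set T : L →ₗ[K] L := ∑ j : Fin (Module.finrank K L), a j • ℓ (j : ℕ) with hT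
  have hT0 : T = 0 := by
    apply c.ext
    intro i
    have h1 := congrFun ha i
    simp only [Finset.sum_apply, Pi.smul_apply, smul_eq_mul, Matrix.of_apply,
      Pi.zero_apply] at h1
    simp only [hT, LinearMap.sum_apply, LinearMap.smul_apply, LinearMap.zero_apply,
      LinearMap.coe_mk, AddHom.coe_mk, smul_eq_mul, ℓ]
    exact h1
  have hvan : ∀ x : L, (∑ j : Fin (Module.finrank K L), a j * f^[(j:ℕ)] x) = 0 := by
    intro x
    have := congrArg (fun g : L →ₗ[K] L => g x) hT0
    simpa only [hT, LinearMap.sum_apply, LinearMap.smul_apply, LinearMap.zero_apply,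
      LinearMap.coe_mk, AddHom.coe_mk, smul_eq_mul, ℓ] using this
  have hded := (linearIndependent_monoidHom L L).comp _ (pow_maps_injective (K := K) (L := L))
  rw [Fintype.linearIndependent_iff] at hded
  intro j
  refine hded a ?_ j
  funext x
  simp only [Finset.sum_apply, Pi.smul_apply, smul_eq_mul, Pi.zero_apply,
    Function.comp_apply, powMonoidHom_apply]
  rw [← hvan x]
  refine Finset.sum_congr rfl fun j' _ => ?_
  rw [frob_iterate hf]

theorem iterate_mem {f : L →+* L} (hf : ∀ x, f x = x ^ Fintype.card K)
    {k : ℕ} {V : Submodule L (Fin k → L)} (hV : FrobClosed K V) (j : ℕ)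
    {w : Fin k → L} (hw : w ∈ V) : (fun i => f^[j] (w i)) ∈ V := by
  induction j generalizing w with
  | zero => simpa using hw
  | succ j ih =>
    have h1 : (fun i => f^[j+1] (w i)) = fun i => f^[j] ((fun i' => w i' ^ Fintype.card K) i) := by
      funext i
      rw [Function.iterate_succ_apply, hf]
    rw [h1]
    exact ih (hV w hw)

theorem descent [FiniteDimensional K L] {f : L →+* L} (hf : ∀ x, f x = x ^ Fintype.card K)
    {k : ℕ} (V : Submodule L (Fin k → L)) (hV : FrobClosed K V) :
    V ≤ Submodule.span L {w : Fin k → L | w ∈ V ∧ ∀ i, f (w i) = w i} := by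
  classical
  intro v hv
  haveI : NeZero (Module.finrank K L) := ⟨(Module.finrank_pos (R := K) (M := L)).ne'⟩
  set c : Module.Basis (Fin (Module.finrank K L)) K L := Module.finBasis K L with hc
  set M : Matrix (Fin (Module.finrank K L)) (Fin (Module.finrank K L)) L :=
    Matrix.of (fun j i : Fin (Module.finrank K L) => f^[(j:ℕ)] (c i)) with hM
  have hrank : M.rank = Module.finrank K L := by
    rw [(rows_linearIndependent hf c).rank_matrix, Fintype.card_fin]
  have hspan : Submodule.span L (Set.range M.transpose) = ⊤ := by
    apply Submodule.eq_top_of_finrank_eq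
    rw [show Module.finrank L (Submodule.span L (Set.range M.transpose)) = M.transpose.rank from
        (Matrix.rank_eq_finrank_span_row _).symm, Matrix.rank_transpose, hrank,
      Module.finrank_pi, Fintype.card_fin]
  have hsingle : (Pi.single (0 : Fin (Module.finrank K L)) (1:L) : Fin (Module.finrank K L) → L)
      ∈ Submodule.span L (Set.range M.transpose) := by rw [hspan]; trivial
  replace hsingle := (Submodule.mem_span_range_iff_exists_fun _).mp hsingle
  obtain ⟨a, ha⟩ := hsingle
  have ha' : ∀ jj, (∑ i, a i * M jj i) = if jj = 0 then 1 else 0 := by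
    intro jj
    have := congrFun ha jj
    simp only [Finset.sum_apply, Pi.smul_apply, smul_eq_mul, Matrix.transpose_apply] at this
    rw [this, Pi.single_apply]
  -- the trace vectors
  set t : Fin (Module.finrank K L) → (Fin k → L) :=
    fun i0 => ∑ j : Fin (Module.finrank K L), M j i0 • (fun i => f^[(j:ℕ)] (v i)) with htdef
  have htV : ∀ i0, t i0 ∈ V := by
    intro i0
    exact Submodule.sum_mem _ fun j _ => Submodule.smul_mem _ _ (iterate_mem hf hV _ hv)
  have htfix : ∀ i0 i, f (t i0 i) = t i0 i := by
    intro i0 i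
    have ht1 : t i0 i = ∑ j ∈ Finset.range (Module.finrank K L),
        f^[j] (c i0) * f^[j] (v i) := by
      rw [htdef]
      simp only [Finset.sum_apply, Pi.smul_apply, smul_eq_mul, hM, Matrix.of_apply]
      exact Fin.sum_univ_eq_sum_range (fun j => f^[j] (c i0) * f^[j] (v i)) _
    set u : ℕ → L := fun j => f^[j] (c i0) * f^[j] (v i) with hu
    have hum : u (Module.finrank K L) = u 0 := by
      simp only [hu, Function.iterate_zero, id_eq]
      rw [frob_iterate_finrank hf, frob_iterate_finrank hf]
    have hfu : ∀ j, f (u j) = u (j + 1) := by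
      intro j
      simp only [hu, map_mul, ← Function.iterate_succ_apply' f]
    rw [ht1, map_sum]
    have h2 : ∀ j, f (u j) = u (j+1) := hfu
    calc (∑ j ∈ Finset.range (Module.finrank K L), f (u j))
        = ∑ j ∈ Finset.range (Module.finrank K L), u (j+1) := by
          exact Finset.sum_congr rfl fun j _ => h2 j
      _ = ∑ j ∈ Finset.range (Module.finrank K L), u j := by
          have e1 := Finset.sum_range_succ' u (Module.finrank K L)
          have e2 := Finset.sum_range_succ u (Module.finrank K L)
          rw [e2] at e1
          rw [hum] at e1
          exact (add_right_cancel e1).symm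
  have hvt : (∑ i0, a i0 • t i0) = v := by
    have h1 : (∑ i0, a i0 • t i0)
        = ∑ i0, ∑ j, (a i0 * M j i0) • (fun i => f^[(j:ℕ)] (v i) : Fin k → L) := by
      refine Finset.sum_congr rfl fun i0 _ => ?_
      rw [htdef, Finset.smul_sum]
      exact Finset.sum_congr rfl fun j _ => smul_smul _ _ _
    rw [h1, Finset.sum_comm]
    simp_rw [← Finset.sum_smul]
    rw [Finset.sum_congr rfl fun j _ => by rw [ha' j]]
    simp_rw [ite_smul, one_smul, zero_smul]
    rw [Finset.sum_ite_eq' Finset.univ (0 : Fin (Module.finrank K L))]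
    simp
  rw [← hvt]
  exact Submodule.sum_mem _ fun i0 _ => Submodule.smul_mem _ _
    (Submodule.subset_span ⟨htV i0, htfix i0⟩)

theorem vrk_sum {ι : Type*} [Fintype ι] (b : ι → Fin k → L)
    (hb : LinearIndependent L b)
    (hbK : ∀ i j, b i j ∈ (algebraMap K L).range) (lam : ι → L) :
    vrk K (∑ i, lam i • b i) = Module.finrank K (Submodule.span K (Set.range lam)) := by
  classical
  choose β hβ using fun i j => hbK i j
  set v : Fin k → L := ∑ i, lam i • b i with hv
  have hvj : ∀ j, v j = ∑ i, (β i j) • lam i := by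
    intro j
    rw [hv]
    simp only [Finset.sum_apply, Pi.smul_apply, smul_eq_mul]
    refine Finset.sum_congr rfl fun i _ => ?_
    rw [← hβ i j, Algebra.smul_def]
    ring
  have h1 : Submodule.span K (Set.range v) ≤ Submodule.span K (Set.range lam) := by
    rw [Submodule.span_le]
    rintro x ⟨j, rfl⟩
    rw [hvj j]
    exact Submodule.sum_mem _ fun i _ =>
      Submodule.smul_mem _ _ (Submodule.subset_span (Set.mem_range_self i))
  have hβli : LinearIndependent K β := by
    rw [Fintype.linearIndependent_iff]
    intro g hg
    have hzero : ∑ i, algebraMap K L (g i) • b i = 0 := by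
      funext j
      have := congrFun hg j
      simp only [Finset.sum_apply, Pi.smul_apply, smul_eq_mul, Pi.zero_apply] at this ⊢
      calc (∑ x, algebraMap K L (g x) * b x j)
          = algebraMap K L (∑ x, g x * β x j) := by
            rw [map_sum]
            exact Finset.sum_congr rfl fun x _ => by rw [← hβ x j, ← map_mul]
        _ = 0 := by rw [this, map_zero]
    have := Fintype.linearIndependent_iff.mp hb (fun i => algebraMap K L (g i)) hzero
    intro i
    exact (algebraMap K L).injective (by rw [map_zero]; exact this i)
  -- dual functionals
  have hdual : ∀ i0 : ι, ∃ φ : (Fin k → K) →ₗ[K] K,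
      ∀ i, φ (β i) = if i = i0 then 1 else 0 := by
    intro i0
    obtain ⟨W', hW'⟩ := (Submodule.span K (Set.range β)).exists_isCompl
    set Bw : Module.Basis ι K (Submodule.span K (Set.range β)) := Module.Basis.span hβli
    refine ⟨(Bw.coord i0).comp
      (Submodule.linearProjOfIsCompl _ _ hW'), fun i => ?_⟩
    have hmem : β i ∈ Submodule.span K (Set.range β) :=
      Submodule.subset_span (Set.mem_range_self i)
    have hproj : (Submodule.linearProjOfIsCompl _ _ hW') (β i) = ⟨β i, hmem⟩ :=
      Submodule.linearProjOfIsCompl_apply_left hW' ⟨β i, hmem⟩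
    rw [LinearMap.comp_apply, hproj]
    have : (⟨β i, hmem⟩ : Submodule.span K (Set.range β)) = Bw i := by
      apply Subtype.ext
      rw [Module.Basis.span_apply]
    rw [this, Module.Basis.coord_apply, Bw.repr_self, Finsupp.single_apply]
  have h2 : Submodule.span K (Set.range lam) ≤ Submodule.span K (Set.range v) := by
    rw [Submodule.span_le]
    rintro x ⟨i0, rfl⟩
    obtain ⟨φ, hφ⟩ := hdual i0
    set a : Fin k → K := fun j => φ (Pi.single j (1:K)) with hadef
    have hφx : ∀ y : Fin k → K, φ y = ∑ j, a j * y j := by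
      intro y
      have hx : y = ∑ j, y j • (Pi.single j (1:K) : Fin k → K) := by
        funext j'
        rw [Finset.sum_apply]
        simp [Pi.single_apply]
      conv_lhs => rw [hx]
      rw [map_sum]
      refine Finset.sum_congr rfl fun j _ => ?_
      rw [map_smul, smul_eq_mul, mul_comm]
  -- evaluate the induced functional on v
    have hGv : (∑ j, a j • v j) = lam i0 := by
      calc (∑ j, a j • v j) = ∑ j, a j • ∑ i, (β i j) • lam i := by
            exact Finset.sum_congr rfl fun j _ => by rw [hvj j]
        _ = ∑ i, (∑ j, a j * β i j) • lam i := by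
            simp_rw [Finset.smul_sum]
            rw [Finset.sum_comm]
            refine Finset.sum_congr rfl fun i _ => ?_
            rw [Finset.sum_smul]
            exact Finset.sum_congr rfl fun j _ => smul_smul _ _ _
        _ = ∑ i, (φ (β i)) • lam i := by
            refine Finset.sum_congr rfl fun i _ => ?_
            rw [hφx (β i)]
        _ = lam i0 := by
            rw [Finset.sum_congr rfl fun i _ => by rw [hφ i]]
            simp_rw [ite_smul, one_smul, zero_smul]
            rw [Finset.sum_ite_eq' Finset.univ i0]
            simp
    rw [← hGv]
    exact Submodule.sum_mem _ fun j _ =>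
      Submodule.smul_mem _ _ (Submodule.subset_span (Set.mem_range_self j))
  rw [vrk, le_antisymm h1 h2]

theorem exists_fixed_basis [FiniteDimensional K L] {f : L →+* L}
    (hf : ∀ x, f x = x ^ Fintype.card K)
    (V : Submodule L (Fin k → L)) (hV : FrobClosed K V) :
    ∃ b : Fin (Module.finrank L V) → (Fin k → L),
      LinearIndependent L b ∧ Submodule.span L (Set.range b) = V ∧
      ∀ i j, b i j ∈ (algebraMap K L).range := by
  classical
  set S : Set (Fin k → L) := {w : Fin k → L | w ∈ V ∧ ∀ i, f (w i) = w i} with hS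
  have hspanS : Submodule.span L S = V := by
    apply le_antisymm
    · rw [Submodule.span_le]; exact fun w hw => hw.1
    · exact descent hf V hV
  obtain ⟨s, hsS, hspan, hli⟩ := exists_linearIndependent L S
  rw [hspanS] at hspan
  haveI : Finite ↥s := hli.finite_of_isNoetherian
  haveI : Fintype ↥s := Fintype.ofFinite _
  have hcard : Fintype.card ↥s = Module.finrank L V := by
    have := finrank_span_set_eq_card hli
    rw [hspan] at this
    rw [this, Set.toFinset_card]
  set e : Fin (Module.finrank L V) ≃ ↥s := (Fintype.equivFinOfCardEq hcard).symm with he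
  refine ⟨fun i => (e i : Fin k → L), ?_, ?_, ?_⟩
  · exact hli.comp e e.injective
  · have hr : Set.range (fun i => (e i : Fin k → L)) = s := by
      ext w
      constructor
      · rintro ⟨i, rfl⟩; exact (e i).2
      · intro hw; exact ⟨e.symm ⟨w, hw⟩, by simp⟩
    rw [hr, hspan]
  · intro i j
    exact fixed_mem_range hf ((hsS (e i).2).2 j)

theorem vrk_le (v : Fin k → L) : vrk K v ≤ k := by
  classical
  refine le_trans (finrank_span_le_card (R := K) (Set.range v)) ?_
  rw [Set.toFinset_range]
  exact le_trans (Finset.card_image_le) (by simp)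

theorem bddAbove_rkset (A : Submodule L (Fin k → L)) :
    BddAbove {r | ∃ v ∈ A, vrk K v = r} := by
  refine ⟨k, fun r hr => ?_⟩
  obtain ⟨v, _, rfl⟩ := hr
  exact vrk_le v

theorem vrk_le_maxrk {A : Submodule L (Fin k → L)} {v : Fin k → L} (hv : v ∈ A) :
    vrk K v ≤ maxrk K A :=
  le_csSup (bddAbove_rkset A) ⟨v, hv, rfl⟩

theorem maxrk_le {A : Submodule L (Fin k → L)} {d : ℕ} (h : ∀ v ∈ A, vrk K v ≤ d) :
    maxrk K A ≤ d := by
  refine csSup_le ⟨vrk K 0, 0, A.zero_mem, rfl⟩ ?_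
  rintro r ⟨v, hv, rfl⟩
  exact h v hv

theorem frobClosed_finrank_eq_maxrk [FiniteDimensional K L]
    (hkm : k ≤ Module.finrank K L)
    (V : Submodule L (Fin k → L)) (hV : FrobClosed K V) :
    Module.finrank L V = maxrk K V := by
  classical
  obtain ⟨f, hf⟩ := exists_frob (K := K) (L := L)
  obtain ⟨bb, hbli, hbspan, hbK⟩ := exists_fixed_basis hf V hV
  have hdk : Module.finrank L V ≤ k := by
    refine le_trans (Submodule.finrank_le V) ?_
    rw [Module.finrank_pi, Fintype.card_fin]
  apply le_antisymm
  · obtain ⟨emb⟩ : Nonempty (Fin (Module.finrank L V) ↪ Fin (Module.finrank K L)) :=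
      Function.Embedding.nonempty_of_card_le (by simpa using le_trans hdk hkm)
    set lam : Fin (Module.finrank L V) → L := fun i => (Module.finBasis K L) (emb i) with hlam
    have hlamli : LinearIndependent K lam :=
      (Module.finBasis K L).linearIndependent.comp emb emb.injective
    have hv : (∑ i, lam i • bb i) ∈ V :=
      (le_of_eq hbspan) (Submodule.sum_mem _ fun i _ => Submodule.smul_mem _ _
        (Submodule.subset_span (Set.mem_range_self i)))
    have hvrk : vrk K (∑ i, lam i • bb i) = Module.finrank L V := by
      rw [vrk_sum bb hbli hbK lam, finrank_span_eq_card hlamli, Fintype.card_fin]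
    exact hvrk ▸ vrk_le_maxrk hv
  · refine maxrk_le fun v hv => ?_
    have hv' : v ∈ Submodule.span L (Set.range bb) := (le_of_eq hbspan.symm) hv
    rw [Submodule.mem_span_range_iff_exists_fun] at hv'
    obtain ⟨lam, hlam⟩ := hv'
    rw [← hlam, vrk_sum bb hbli hbK lam]
    refine le_trans (finrank_span_le_card (R := K) (Set.range lam)) ?_
    rw [Set.toFinset_range]
    exact le_trans (Finset.card_image_le) (by simp)

end Aux

theorem covering {L E ι' : Type*} [Field L] [Fintype L] [AddCommGroup E] [Module L E]
    [Finite E] (s : Finset ι') (W : ι' → Submodule L E) (A : Submodule L E)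
    (hcard : s.card < Fintype.card L)
    (hcover : (A : Set E) ⊆ ⋃ c ∈ s, (W c : Set E)) :
    ∃ c ∈ s, A ≤ W c := by
  classical
  haveI : Fintype E := Fintype.ofFinite E
  by_contra hcon
  push_neg at hcon
  have hex : ∀ c ∈ s, ∃ a ∈ A, a ∉ W c := fun c hc =>
    SetLike.not_le_iff_exists.mp (hcon c hc)
  choose a haA haW using hex
  have claim1 : ∀ c (hc : c ∈ s),
      Fintype.card L * Fintype.card ↥(A ⊓ W c) ≤ Fintype.card ↥A := by
    intro c hc
    have hmem : ∀ (x : L) (w : ↥(A ⊓ W c)), (w : E) + x • a c hc ∈ A := fun x w =>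
      A.add_mem w.2.1 (A.smul_mem x (haA c hc))
    set F : L × ↥(A ⊓ W c) → ↥A := fun p => ⟨(p.2 : E) + p.1 • a c hc, hmem p.1 p.2⟩ with hF
    have hinj : Function.Injective F := by
      rintro ⟨x, w⟩ ⟨x', w'⟩ heq
      have h1 : (w : E) + x • a c hc = (w' : E) + x' • a c hc := congrArg Subtype.val heq
      have hxx : x = x' := by
        by_contra hne
        have h2 : (x - x') • a c hc = (w' : E) - w := by
          rw [sub_smul]; linear_combination (norm := module) h1
        have h3 : a c hc = (x - x')⁻¹ • ((w' : E) - w) := by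
          rw [← h2, smul_smul, inv_mul_cancel₀ (sub_ne_zero.mpr hne), one_smul]
        have h4 : ((w' : E) - w) ∈ W c := (W c).sub_mem w'.2.2 w.2.2
        exact haW c hc (h3 ▸ (W c).smul_mem _ h4)
      subst hxx
      have h5 : (w : E) = w' := by
        have := add_right_cancel h1
        exact this
      exact Prod.ext rfl (Subtype.ext h5)
    calc Fintype.card L * Fintype.card ↥(A ⊓ W c)
        = Fintype.card (L × ↥(A ⊓ W c)) := (Fintype.card_prod _ _).symm
      _ ≤ Fintype.card ↥A := Fintype.card_le_of_injective F hinj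
  have claim2 : Fintype.card ↥A ≤ ∑ c ∈ s, Fintype.card ↥(A ⊓ W c) := by
    have hsub : (A : Set E).toFinset ⊆ s.biUnion
        (fun c => ((A ⊓ W c : Submodule L E) : Set E).toFinset) := by
      intro x hx
      rw [Set.mem_toFinset] at hx
      obtain ⟨U, ⟨c, rfl⟩, hU⟩ := hcover hx
      simp only [Set.mem_iUnion] at hU
      obtain ⟨hc, hxW⟩ := hU
      rw [Finset.mem_biUnion]
      exact ⟨c, hc, by rw [Set.mem_toFinset]; exact ⟨hx, hxW⟩⟩
    calc Fintype.card ↥A = (A : Set E).toFinset.card := by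
          rw [Set.toFinset_card]; rfl
      _ ≤ _ := Finset.card_le_card hsub
      _ ≤ ∑ c ∈ s, ((A ⊓ W c : Submodule L E) : Set E).toFinset.card := Finset.card_biUnion_le
      _ = ∑ c ∈ s, Fintype.card ↥(A ⊓ W c) := by
          refine Finset.sum_congr rfl fun c _ => ?_
          rw [Set.toFinset_card]; rfl
  have hApos : 0 < Fintype.card ↥A := Fintype.card_pos_iff.mpr ⟨0, A.zero_mem⟩
  have hfinal : Fintype.card L * Fintype.card ↥A ≤ s.card * Fintype.card ↥A := by
    calc Fintype.card L * Fintype.card ↥A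
        ≤ Fintype.card L * ∑ c ∈ s, Fintype.card ↥(A ⊓ W c) :=
          Nat.mul_le_mul_left _ claim2
      _ = ∑ c ∈ s, Fintype.card L * Fintype.card ↥(A ⊓ W c) := Finset.mul_sum _ _ _
      _ ≤ ∑ c ∈ s, Fintype.card ↥A := Finset.sum_le_sum fun c hc => claim1 c hc
      _ = s.card * Fintype.card ↥A := by rw [Finset.sum_const, smul_eq_mul]
  have hlt : s.card * Fintype.card ↥A < Fintype.card L * Fintype.card ↥A :=
    Nat.mul_lt_mul_of_lt_of_le hcard (le_refl _) hApos
  omega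

section Aux2
variable {K L : Type*} [Field K] [Field L] [Algebra K L] [Fintype K] {k : ℕ}
set_option linter.unusedSectionVars false

theorem optimal_frobClosed [FiniteDimensional K L] (hkm : k ≤ Module.finrank K L)
    (A : Submodule L (Fin k → L)) (hA : Module.finrank L A = maxrk K A) :
    FrobClosed K A := by
  classical
  haveI : Finite L := Module.finite_of_finite K
  haveI : Fintype L := Fintype.ofFinite L
  obtain ⟨f, hf⟩ := exists_frob (K := K) (L := L)
  set q := Fintype.card K with hq
  -- the Frobenius closure of A
  set Φ : ℕ → (Fin k → L) → (Fin k → L) := fun j w i => f^[j] (w i) with hΦ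
  set Astar : Submodule L (Fin k → L) :=
    Submodule.span L (⋃ j : ℕ, Φ j '' (A : Set (Fin k → L))) with hAstar
  have hphi_pow : ∀ w : Fin k → L, (fun i => w i ^ q) = Φ 1 w := by
    intro w; funext i; rw [hΦ]; simp [hf]
  have hAsub : A ≤ Astar := by
    intro w hw
    apply Submodule.subset_span
    exact Set.mem_iUnion.mpr ⟨0, ⟨w, hw, by funext i; simp [hΦ]⟩⟩
  have hstar_frob : FrobClosed K Astar := by
    intro v hv
    rw [hphi_pow v]
    induction hv using Submodule.span_induction with
    | mem w hw =>
      obtain ⟨U, ⟨j, rfl⟩, ⟨a, ha, rfl⟩⟩ := hw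
      apply Submodule.subset_span
      refine Set.mem_iUnion.mpr ⟨j + 1, ⟨a, ha, ?_⟩⟩
      funext i
      rw [hΦ]
      simp only []
      rw [Function.iterate_succ_apply' f j (a i), Function.iterate_one]
    | zero =>
      have : Φ 1 (0 : Fin k → L) = 0 := by
        funext i; rw [hΦ]; simp
      rw [this]; exact Submodule.zero_mem _
    | add x y hx hy hx' hy' =>
      have : Φ 1 (x + y) = Φ 1 x + Φ 1 y := by
        funext i; rw [hΦ]; simp [map_add]
      rw [this]; exact Submodule.add_mem _ hx' hy'
    | smul c x hx hx' =>
      have : Φ 1 (c • x) = f c • Φ 1 x := by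
        funext i; rw [hΦ]; simp [map_mul]
      rw [this]; exact Submodule.smul_mem _ _ hx'
  have hstar_min : ∀ W : Submodule L (Fin k → L), FrobClosed K W → A ≤ W → Astar ≤ W := by
    intro W hWfrob hAW
    rw [hAstar, Submodule.span_le]
    rintro w hw
    obtain ⟨U, ⟨j, rfl⟩, ⟨a, ha, rfl⟩⟩ := hw
    induction j with
    | zero => simpa [hΦ] using hAW ha
    | succ j ih =>
      have h1 : Φ (j+1) a = Φ 1 (Φ j a) := by
        funext i; rw [hΦ]; simp only []
        rw [Function.iterate_succ_apply' f j (a i), Function.iterate_one]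
      rw [h1, ← hphi_pow]
      exact hWfrob _ ih
  -- fixed basis of Astar
  obtain ⟨bb, hbli, hbspan, hbK⟩ := exists_fixed_basis hf Astar hstar_frob
  set B : Module.Basis (Fin (Module.finrank L ↥Astar)) L ↥Astar :=
    (Module.Basis.span hbli).map (LinearEquiv.ofEq _ _ hbspan) with hB
  have hBcoe : ∀ i, (B i : Fin k → L) = bb i := by
    intro i
    rw [hB]
    simp [Module.Basis.span_apply]
  have hsum_repr : ∀ x : ↥Astar, (x : Fin k → L) = ∑ i, B.repr x i • bb i := by
    intro x
    have := B.sum_repr x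
    calc (x : Fin k → L) = ((∑ i, B.repr x i • B i : ↥Astar) : Fin k → L) := by rw [this]
      _ = ∑ i, B.repr x i • bb i := by
          rw [AddSubmonoidClass.coe_finset_sum]
          exact Finset.sum_congr rfl fun i _ => by rw [SetLike.val_smul, hBcoe]
  -- Frobenius on Astar in coordinates
  have hfrob_elt : ∀ x : ↥Astar, Φ 1 (x : Fin k → L) ∈ Astar := by
    intro x
    have := hstar_frob (x : Fin k → L) x.2
    rwa [hphi_pow] at this
  have hrepr_frob : ∀ (x : ↥Astar),
      (⟨Φ 1 (x : Fin k → L), hfrob_elt x⟩ : ↥Astar) = ∑ i, f (B.repr x i) • B i := by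
    intro x
    apply Subtype.ext
    rw [AddSubmonoidClass.coe_finset_sum]
    show Φ 1 (x : Fin k → L) = _
    have h1 : Φ 1 (x : Fin k → L) = ∑ i, f (B.repr x i) • bb i := by
      funext i'
      rw [hΦ]
      simp only [Function.iterate_one]
      conv_lhs => rw [hsum_repr x]
      rw [Finset.sum_apply, map_sum, Finset.sum_apply]
      refine Finset.sum_congr rfl fun i _ => ?_
      simp only [Pi.smul_apply, smul_eq_mul, map_mul]
      rw [frob_mem_range hf (hbK i i')]
    rw [h1]
    exact Finset.sum_congr rfl fun i _ => by rw [SetLike.val_smul, hBcoe]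
  -- main step : find v ∈ A with (Module.finrank L ↥Astar) ≤ vrk K v
  have hmain : ∃ v ∈ A, (Module.finrank L ↥Astar) ≤ vrk K v := by
    by_contra hno
    push_neg at hno
    -- functionals
    set fc : (Fin (Module.finrank L ↥Astar) → K) → (↥Astar →ₗ[L] L) :=
      fun c => ∑ i, algebraMap K L (c i) • (B.coord i) with hfc
    have hfc_apply : ∀ c x, fc c x = ∑ i, algebraMap K L (c i) * B.repr x i := by
      intro c x
      rw [hfc]
      simp [LinearMap.sum_apply, Module.Basis.coord_apply, Algebra.smul_def]
    -- covering hypothesis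
    set A' : Submodule L ↥Astar := A.comap Astar.subtype with hA'
    set S : Finset (Fin (Module.finrank L ↥Astar) → K) := Finset.univ.erase 0 with hS
    have hcover : (A' : Set ↥Astar) ⊆ ⋃ c ∈ S, ((LinearMap.ker (fc c) : Submodule L ↥Astar) : Set ↥Astar) := by
      intro x hx
      have hxA : (x : Fin k → L) ∈ A := hx
      have hvrk : vrk K (x : Fin k → L) < (Module.finrank L ↥Astar) := hno _ hxA
      have hnli : ¬ LinearIndependent K (fun i => B.repr x i) := by
        intro hli
        rw [show vrk K (x : Fin k → L) = Module.finrank K (Submodule.span K (Set.range (fun i => B.repr x i))) from by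
            conv_lhs => rw [show (x : Fin k → L) = ∑ i, B.repr x i • bb i from hsum_repr x]
            exact vrk_sum bb hbli hbK _ ,
          finrank_span_eq_card hli, Fintype.card_fin] at hvrk
        omega
      rw [Fintype.not_linearIndependent_iff] at hnli
      obtain ⟨g, hg0, i0, hgi0⟩ := hnli
      have hgS : g ∈ S := by
        rw [hS, Finset.mem_erase]
        exact ⟨fun h => hgi0 (congrFun h i0), Finset.mem_univ _⟩
      refine Set.mem_iUnion₂.mpr ⟨g, hgS, ?_⟩
      rw [SetLike.mem_coe, LinearMap.mem_ker, hfc_apply]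
      rw [← hg0]
      exact Finset.sum_congr rfl fun i _ => by rw [Algebra.smul_def]
    have hcard : S.card < Fintype.card L := by
      have h1 : S.card = Fintype.card K ^ (Module.finrank L ↥Astar) - 1 := by
        rw [hS, Finset.card_erase_of_mem (Finset.mem_univ _), Finset.card_univ]
        simp [Fintype.card_fun]
      have huk : (Module.finrank L ↥Astar) ≤ k := by
        refine le_trans (Submodule.finrank_le _) ?_
        rw [Module.finrank_pi, Fintype.card_fin]
      have h2 : Fintype.card L = Fintype.card K ^ Module.finrank K L := Module.card_eq_pow_finrank
      have h3 : Fintype.card K ^ (Module.finrank L ↥Astar) ≤ Fintype.card K ^ Module.finrank K L :=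
        Nat.pow_le_pow_right Fintype.card_pos (le_trans huk hkm)
      have h4 : 1 ≤ Fintype.card K ^ (Module.finrank L ↥Astar) := Nat.one_le_pow _ _ Fintype.card_pos
      omega
    obtain ⟨c, hcS, hcker⟩ := covering S (fun c => LinearMap.ker (fc c)) A' hcard hcover
    -- the kernel is Frobenius-closed, so Astar ≤ it; contradiction
    set W : Submodule L (Fin k → L) := (LinearMap.ker (fc c)).map Astar.subtype with hW
    have hAW : A ≤ W := by
      intro v hv
      exact ⟨⟨v, hAsub hv⟩, hcker hv, rfl⟩
    have hWfrob : FrobClosed K W := by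
      rintro v ⟨x, hxker, rfl⟩
      rw [hphi_pow]
      refine ⟨⟨Φ 1 (x : Fin k → L), hfrob_elt x⟩, ?_, rfl⟩
      simp only [SetLike.mem_coe, LinearMap.mem_ker]
      rw [hrepr_frob x, hfc_apply]
      have hrepr : ∀ i, B.repr (∑ i', f (B.repr x i') • B i') i = f (B.repr x i) := by
        intro i
        rw [B.repr_sum_self]
      calc (∑ i, algebraMap K L (c i) * B.repr (∑ i', f (B.repr x i') • B i') i)
          = ∑ i, algebraMap K L (c i) * f (B.repr x i) := by
            exact Finset.sum_congr rfl fun i _ => by rw [hrepr i]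
        _ = f (∑ i, algebraMap K L (c i) * B.repr x i) := by
            rw [map_sum]
            refine Finset.sum_congr rfl fun i _ => ?_
            rw [map_mul, frob_mem_range hf ⟨c i, rfl⟩]
        _ = 0 := by
            rw [show (∑ i, algebraMap K L (c i) * B.repr x i) = 0 from by
              rw [← hfc_apply]; exact hxker, map_zero]
    have hstarW : Astar ≤ W := hstar_min W hWfrob hAW
    -- contradiction with fc c ≠ 0
    have hc0 : c ≠ 0 := (Finset.mem_erase.mp hcS).1
    obtain ⟨i0, hci0⟩ : ∃ i0, c i0 ≠ 0 := by
      by_contra hall; push_neg at hall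
      exact hc0 (funext hall)
    have hBi0 : (B i0 : Fin k → L) ∈ W := hstarW (B i0).2
    obtain ⟨y, hyker, hy⟩ := hBi0
    have hyB : y = B i0 := Subtype.ext hy
    simp only [SetLike.mem_coe, LinearMap.mem_ker] at hyker
    rw [hyB, hfc_apply] at hyker
    have : (∑ i, algebraMap K L (c i) * B.repr (B i0) i) = algebraMap K L (c i0) := by
      rw [Finset.sum_congr rfl fun i (_ : i ∈ Finset.univ) => by
        rw [B.repr_self, Finsupp.single_apply]]
      simp_rw [mul_ite, mul_one, mul_zero]
      rw [Finset.sum_ite_eq Finset.univ i0]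
      simp
    rw [this] at hyker
    exact hci0 ((algebraMap K L).injective (by rw [hyker, map_zero]))
  -- conclude A = Astar
  obtain ⟨v, hvA, hvrk⟩ := hmain
  have h1 : Module.finrank L ↥Astar ≤ maxrk K A := le_trans hvrk (vrk_le_maxrk hvA)
  have h3 : Module.finrank L ↥Astar ≤ Module.finrank L ↥A := by omega
  have heq : A = Astar := Submodule.eq_of_le_of_finrank_le hAsub h3
  rw [heq]
  exact hstar_frob

end Aux2

/-- for a nonzero Gabidulin code C of dimension 1 ≤ t ≤ k and
1 ≤ r ≤ t, the r-th generalized rank weight (min dim of a Frobenius-closed V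
with dim(V ⊓ C) ≥ r) equals the min dim of an optimal Gabidulin anticode A
with dim(A ⊓ C) ≥ r. -/
theorem stmt10 {K L : Type*} [Field K] [Field L] [Algebra K L] [Fintype K] {k m : ℕ}
    (hk : 1 ≤ k) (hkm : k ≤ m) (hm : Module.finrank K L = m)
    (C : Submodule L (Fin k → L)) (hC : C ≠ ⊥)
    (ht : Module.finrank L C ≤ k)
    (r : ℕ) (hr1 : 1 ≤ r) (hr2 : r ≤ Module.finrank L C) :
    sInf {d : ℕ | ∃ V : Submodule L (Fin k → L),
        FrobClosed K V ∧ r ≤ Module.finrank L ↥(V ⊓ C) ∧ Module.finrank L V = d} =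
    sInf {d : ℕ | ∃ A : Submodule L (Fin k → L),
        Module.finrank L A = maxrk K A ∧ r ≤ Module.finrank L ↥(A ⊓ C) ∧
        Module.finrank L A = d} := by
  haveI : FiniteDimensional K L := FiniteDimensional.of_finrank_pos (by omega)
  have hkm' : k ≤ Module.finrank K L := by rw [hm]; exact hkm
  have hsets : {d : ℕ | ∃ V : Submodule L (Fin k → L),
        FrobClosed K V ∧ r ≤ Module.finrank L ↥(V ⊓ C) ∧ Module.finrank L V = d} =
      {d : ℕ | ∃ A : Submodule L (Fin k → L),
        Module.finrank L A = maxrk K A ∧ r ≤ Module.finrank L ↥(A ⊓ C) ∧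
        Module.finrank L A = d} := by
    ext d
    constructor
    · rintro ⟨V, hV, hr, rfl⟩
      exact ⟨V, frobClosed_finrank_eq_maxrk hkm' V hV, hr, rfl⟩
    · rintro ⟨A, hA, hr, rfl⟩
      exact ⟨A, optimal_frobClosed hkm' A hA, hr, rfl⟩
  rw [hsets]
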